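/- Let K be a subgroup of G and θ a topological partial action of K on X. Then G×_K(X_K) is G-equivariantly homeomorphic to G×_K X, where X_K = K×_K X is the enveloping space of θ. -/

import Mathlib

/-- A set-theoretic partial action of a group `G` on a set `X`, encoded by a
domain predicate `dom g x` (meaning "`g • x` is defined") and a total map `act`
whose values are only relevant on the domain; axioms (PA1)-(PA3). -/
structure SetPartialAction (G : Type*) (X : Type*) [Group G] where
  dom : G → X → Prop
  act : G → X → X
  dom_one : ∀ x, dom 1 x
  act_one : ∀ x, act 1 x = x
  dom_inv : ∀ g x, dom g x → dom g⁻¹ (act g x)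
  act_inv : ∀ g x, dom g x → act g⁻¹ (act g x) = x
  dom_mul : ∀ g h x, dom h x → dom g (act h x) → dom (g * h) x
  act_mul : ∀ g h x, dom h x → dom g (act h x) → act g (act h x) = act (g * h) x

/-- The enveloping relation on `G × X`: `(g,x) R (h,y)` iff `x ∈ X_{g⁻¹h}`
(i.e. `θ_{h⁻¹g}` is defined at `x`) and `θ_{h⁻¹g}(x) = y`. -/
def envRel {G X : Type*} [Group G] (θ : SetPartialAction G X) :
    (G × X) → (G × X) → Prop :=
  fun p q => θ.dom (q.1⁻¹ * p.1) p.2 ∧ θ.act (q.1⁻¹ * p.1) p.2 = q.2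

/-- A topological partial action: each domain X_g is open and each θ_g is a
homeomorphism of X_{g⁻¹} onto X_g (encoded by continuity of act g on its domain,
the inverse being act g⁻¹). -/
structure TopPartialAction (G X : Type*) [Group G] [TopologicalSpace G]
    [TopologicalSpace X] extends SetPartialAction G X where
  isOpen_dom : ∀ g, IsOpen {x | dom g x}
  continuousOn_act : ∀ g, ContinuousOn (act g) {x | dom g x}

/-- The twisted-product relation on G × X for a partial action θ of a subgroup
K ≤ G on X: (g,x) ~ (g k⁻¹, θ_k x) for k ∈ K with θ_k x defined.  The twisted
product G ×_K X is the quotient Quot (twRel K θ). -/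
def twRel {G X : Type*} [Group G] (K : Subgroup G) (θ : SetPartialAction K X) :
    (G × X) → (G × X) → Prop :=
  fun p q => ∃ k : K, θ.dom k p.2 ∧ q = (p.1 * (k : G)⁻¹, θ.act k p.2)

/-- The twisted-product relation on G × X_K, where X_K = K ×_K X is the
enveloping space of θ carrying the enveloping (global) K-action
k • [h,x] = [kh,x]: (g,z) ~ (g k⁻¹, k • z). -/
def twRelEnv {G X : Type*} [Group G] (K : Subgroup G) (θ : SetPartialAction K X) :
    (G × Quot (envRel θ)) → (G × Quot (envRel θ)) → Prop :=
  fun p q => ∃ (k h : K) (x : X), p.2 = Quot.mk (envRel θ) (h, x) ∧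
    q = (p.1 * (k : G)⁻¹, Quot.mk (envRel θ) (k * h, x))


open Topology

section Aux

variable {H X : Type*} [Group H]

theorem envRel_equivalence (θ : SetPartialAction H X) : Equivalence (envRel θ) := by
  constructor
  · intro p
    exact ⟨by simpa using θ.dom_one p.2, by simpa using θ.act_one p.2⟩
  · rintro ⟨h, x⟩ ⟨h', x'⟩ ⟨hd, ha⟩
    refine ⟨?_, ?_⟩ <;> simp only at hd ha ⊢
    · subst ha
      have := θ.dom_inv _ _ hd
      simpa [mul_inv_rev] using this
    · subst ha
      have := θ.act_inv _ _ hd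
      simpa [mul_inv_rev] using this
  · rintro ⟨h, x⟩ ⟨h', x'⟩ ⟨h'', x''⟩ ⟨hd1, ha1⟩ ⟨hd2, ha2⟩
    simp only at hd1 ha1 hd2 ha2 ⊢
    subst ha1
    have hdom : θ.dom (h''⁻¹ * h' * (h'⁻¹ * h)) x := θ.dom_mul _ _ _ hd1 hd2
    have hact := θ.act_mul (h''⁻¹ * h') (h'⁻¹ * h) x hd1 hd2
    refine ⟨by simpa [mul_assoc] using hdom, ?_⟩
    show θ.act (h''⁻¹ * h) x = x''
    rw [← ha2, hact]
    congr 1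
    group

variable [TopologicalSpace H] [IsTopologicalGroup H] [TopologicalSpace X]

theorem aux_open_piece (θ : TopPartialAction H X) (k : H) {U : Set (H × X)}
    (hU : IsOpen U) (hUd : U ⊆ {p | θ.dom k p.2}) :
    IsOpen ((fun p : H × X => (p.1 * k⁻¹, θ.act k p.2)) '' U) := by
  have hset : (fun p : H × X => (p.1 * k⁻¹, θ.act k p.2)) '' U
      = {p : H × X | θ.dom k⁻¹ p.2} ∩
        (fun p : H × X => (p.1 * k, θ.act k⁻¹ p.2)) ⁻¹' U := by
    ext ⟨h, x⟩
    constructor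
    · rintro ⟨⟨h0, x0⟩, hmem, heq⟩
      have hd : θ.dom k x0 := hUd hmem
      obtain ⟨rfl, rfl⟩ : h0 * k⁻¹ = h ∧ θ.act k x0 = x := Prod.mk.injEq .. ▸ heq
      refine ⟨θ.dom_inv _ _ hd, ?_⟩
      simpa [Set.mem_preimage, θ.act_inv _ _ hd, mul_assoc] using hmem
    · rintro ⟨hdx, hpre⟩
      refine ⟨(h * k, θ.act k⁻¹ x), hpre, ?_⟩
      have := θ.act_inv k⁻¹ x hdx
      simp only [inv_inv] at this
      simp [this, mul_assoc]
  rw [hset]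
  have hs : IsOpen {p : H × X | θ.dom k⁻¹ p.2} :=
    (θ.isOpen_dom k⁻¹).preimage continuous_snd
  refine ContinuousOn.isOpen_inter_preimage ?_ hs hU
  refine ContinuousOn.prodMk ?_ ?_
  · exact (continuous_fst.mul continuous_const).continuousOn
  · exact (θ.continuousOn_act k⁻¹).comp continuousOn_snd (fun p hp => hp)

theorem isOpenMap_mk_env (θ : TopPartialAction H X) :
    IsOpenMap (Quot.mk (envRel θ.toSetPartialAction)) := by
  intro W hW
  have hpre : Quot.mk (envRel θ.toSetPartialAction) ⁻¹'
        (Quot.mk (envRel θ.toSetPartialAction) '' W)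
      = ⋃ k : H, (fun p : H × X => (p.1 * k⁻¹, θ.act k p.2)) ''
          (W ∩ {p | θ.dom k p.2}) := by
    ext ⟨h, x⟩
    simp only [Set.mem_preimage, Set.mem_image, Set.mem_iUnion, Set.mem_inter_iff]
    constructor
    · rintro ⟨⟨h0, x0⟩, hq, heq⟩
      have hrel : envRel θ.toSetPartialAction (h0, x0) (h, x) :=
        ((envRel_equivalence θ.toSetPartialAction).eqvGen_iff).1 (Quot.eqvGen_exact heq)
      obtain ⟨hd, ha⟩ := hrel
      refine ⟨h⁻¹ * h0, (h0, x0), ⟨hq, hd⟩, ?_⟩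
      simp only at ha ⊢
      rw [ha]
      simp [mul_assoc]
    · rintro ⟨k, ⟨h0, x0⟩, ⟨hq, hd⟩, heq⟩
      refine ⟨(h0, x0), hq, Quot.sound ?_⟩
      obtain ⟨rfl, rfl⟩ : h0 * k⁻¹ = h ∧ θ.act k x0 = x := Prod.mk.injEq .. ▸ heq
      exact ⟨by simpa [mul_assoc] using hd, by simp [mul_assoc]⟩
  have : IsOpen (Quot.mk (envRel θ.toSetPartialAction) ⁻¹'
      (Quot.mk (envRel θ.toSetPartialAction) '' W)) := by
    rw [hpre]
    exact isOpen_iUnion fun k =>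
      aux_open_piece θ k (hW.inter ((θ.isOpen_dom k).preimage continuous_snd))
        Set.inter_subset_right
  exact isQuotientMap_quot_mk.isOpen_preimage.1 this

end Aux

section Main

variable {G X : Type*} [Group G] (K : Subgroup G)

/-- forward map on representatives, lifted in the second coordinate. -/
def fwdAux (θ : SetPartialAction K X) : G × Quot (envRel θ) → Quot (twRel K θ) :=
  fun p => Quot.lift (fun q : K × X => Quot.mk (twRel K θ) (p.1 * (q.1 : G), q.2))
    (by
      rintro ⟨h, x⟩ ⟨h', x'⟩ ⟨hd, ha⟩
      simp only at hd ha ⊢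
      refine Quot.sound ⟨h'⁻¹ * h, hd, ?_⟩
      simp only [ha]
      have hc : ((↑(h'⁻¹ * h) : G))⁻¹ = (↑h : G)⁻¹ * ↑h' := by push_cast; group
      rw [hc]
      simp [mul_assoc]) p.2

def fwdQ (θ : SetPartialAction K X) : Quot (twRelEnv K θ) → Quot (twRel K θ) :=
  Quot.lift (fwdAux K θ)
    (by
      rintro ⟨g, z⟩ ⟨g', z'⟩ ⟨k, h, x, hz, hq⟩
      obtain ⟨rfl, rfl⟩ : g' = g * (k : G)⁻¹ ∧ z' = Quot.mk (envRel θ) (k * h, x) :=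
        Prod.mk.injEq .. ▸ hq
      subst hz
      show Quot.mk (twRel K θ) (g * (h : G), x)
          = Quot.mk (twRel K θ) (g * (k : G)⁻¹ * ((k * h : K) : G), x)
      congr 2
      push_cast
      simp [mul_assoc])

def bwdQ (θ : SetPartialAction K X) : Quot (twRel K θ) → Quot (twRelEnv K θ) :=
  Quot.lift (fun p : G × X => Quot.mk (twRelEnv K θ) (p.1, Quot.mk (envRel θ) (1, p.2)))
    (by
      rintro ⟨g, x⟩ ⟨g', x'⟩ ⟨k, hd, hq⟩
      obtain ⟨rfl, rfl⟩ : g' = g * (k : G)⁻¹ ∧ x' = θ.act k x := Prod.mk.injEq .. ▸ hq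
      have henv : Quot.mk (envRel θ) ((1 : K), θ.act k x) = Quot.mk (envRel θ) (k * 1, x) := by
        refine (Quot.sound ?_).symm
        exact ⟨by simpa using hd, by simp⟩
      show Quot.mk (twRelEnv K θ) (g, Quot.mk (envRel θ) (1, x))
          = Quot.mk (twRelEnv K θ) (g * (k : G)⁻¹, Quot.mk (envRel θ) (1, θ.act k x))
      rw [henv]
      exact Quot.sound ⟨k, 1, x, rfl, rfl⟩)

end Main

/-- G ×_K (X_K) is G-equivariantly homeomorphic to G ×_K X via
[g, [h,x]] ↦ [gh, x]. -/
theorem stmt14 {G X : Type*} [Group G] [TopologicalSpace G] [IsTopologicalGroup G]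
    [T2Space G] [TopologicalSpace X] (K : Subgroup G) (θ : TopPartialAction K X) :
    ∃ F : Quot (twRelEnv K θ.toSetPartialAction) ≃ₜ Quot (twRel K θ.toSetPartialAction),
      ∀ (g : G) (h : K) (x : X),
        F (Quot.mk _ (g, Quot.mk (envRel θ.toSetPartialAction) (h, x))) =
          Quot.mk (twRel K θ.toSetPartialAction) (g * (h : G), x) := by
  set θ0 := θ.toSetPartialAction with hθ0
  have left_inv : Function.LeftInverse (bwdQ K θ0) (fwdQ K θ0) := by
    intro z
    induction z using Quot.ind with
    | _ p =>
      obtain ⟨g, z⟩ := p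
      induction z using Quot.ind with
      | _ q =>
        obtain ⟨h, x⟩ := q
        show Quot.mk (twRelEnv K θ0) (g * (h : G), Quot.mk (envRel θ0) (1, x))
            = Quot.mk (twRelEnv K θ0) (g, Quot.mk (envRel θ0) (h, x))
        refine (Quot.sound ⟨h⁻¹, h, x, rfl, ?_⟩).symm
        simp
  have right_inv : Function.RightInverse (bwdQ K θ0) (fwdQ K θ0) := by
    intro z
    induction z using Quot.ind with
    | _ p =>
      obtain ⟨g, x⟩ := p
      show Quot.mk (twRel K θ0) (g * ((1 : K) : G), x) = Quot.mk (twRel K θ0) (g, x)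
      simp
  have hcont_fwd : Continuous (fwdQ K θ0) := by
    rw [isQuotientMap_quot_mk.continuous_iff]
    have hq2 : Topology.IsQuotientMap (Prod.map (id : G → G) (Quot.mk (envRel θ0))) :=
      (IsOpenMap.id.prodMap (isOpenMap_mk_env θ)).isQuotientMap
        (continuous_id.prodMap continuous_quot_mk)
        (Function.surjective_id.prodMap Quot.mk_surjective)
    rw [hq2.continuous_iff]
    show Continuous fun p : G × K × X => Quot.mk (twRel K θ0) (p.1 * (p.2.1 : G), p.2.2)
    exact continuous_quot_mk.comp
      ((continuous_fst.mul (continuous_subtype_val.comp (continuous_fst.comp continuous_snd))).prodMk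
        (continuous_snd.comp continuous_snd))
  have hcont_bwd : Continuous (bwdQ K θ0) := by
    refine continuous_quot_lift _ ?_
    exact continuous_quot_mk.comp
      (continuous_fst.prodMk (continuous_quot_mk.comp (continuous_const.prodMk continuous_snd)))
  refine ⟨⟨⟨fwdQ K θ0, bwdQ K θ0, left_inv, right_inv⟩, hcont_fwd, hcont_bwd⟩, ?_⟩
  intro g h x
  rfl
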